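/- Suppose f and g are commuting orientation-preserving C² diffeomorphisms of the real line ℝ, each of which has at least one fixed point. Then f maps each connected component of Fix(g) onto itself, and the frontier ∂Fix(g) = Fix(g) \ Int(Fix(g)) is contained in Fix(f); symmetrically, g maps each connected component of Fix(f) onto itself and ∂Fix(f) ⊆ Fix(g). -/

import Mathlib

/-- `f` is an orientation-preserving `C^n` diffeomorphism of `ℝ`: a `C^n`
bijection of `ℝ` with everywhere positive derivative (its inverse is then
automatically `C^n`). -/
def IsDiffeoR (n : WithTop ℕ∞) (f : ℝ → ℝ) : Prop :=
  Function.Bijective f ∧ ContDiff ℝ n f ∧ ∀ x : ℝ, 0 < deriv f x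

open Set Filter Topology

namespace KP

lemma mono (f : ℝ → ℝ) (hf : IsDiffeoR 2 f) : StrictMono f :=
  strictMono_of_deriv_pos hf.2.2

lemma hd (f : ℝ → ℝ) (hf : IsDiffeoR 2 f) (x : ℝ) : HasDerivAt f (deriv f x) x :=
  ((hf.2.1.differentiable (by norm_num)) x).hasDerivAt

section helpers

variable {f : ℝ → ℝ} {p b : ℝ}

/-- points of `[p,b]` stay in `[p,b]` and move right. -/
lemma fstep (hf : IsDiffeoR 2 f) (hpb : p < b) (hfb : f b = b)
    (hfgt : ∀ y, p ≤ y → y < b → y < f y) :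
    ∀ y, y ∈ Icc p b → (y ≤ f y ∧ f y ∈ Icc p b) := by
  rintro y ⟨hpy, hyb⟩
  rcases eq_or_lt_of_le hyb with rfl | hlt
  · exact ⟨le_of_eq hfb.symm, ⟨hpy.trans (le_of_eq hfb.symm), le_of_eq hfb⟩⟩
  · have h1 : y < f y := hfgt y hpy hlt
    have h2 : f y < b := by
      have := (mono f hf) hlt
      rwa [hfb] at this
    exact ⟨h1.le, ⟨hpy.trans h1.le, h2.le⟩⟩

lemma iter_in (hf : IsDiffeoR 2 f) (hpb : p < b) (hfb : f b = b)
    (hfgt : ∀ y, p ≤ y → y < b → y < f y) {z : ℝ} (hz : z ∈ Icc p b) (n : ℕ) :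
    f^[n] z ∈ Icc p b := by
  induction n with
  | zero => simpa using hz
  | succ n ih =>
    rw [Function.iterate_succ_apply']
    exact (fstep hf hpb hfb hfgt _ ih).2

lemma iter_tendsto (hf : IsDiffeoR 2 f) (hpb : p < b) (hfb : f b = b)
    (hfgt : ∀ y, p ≤ y → y < b → y < f y) {z : ℝ} (hz : z ∈ Icc p b) :
    Tendsto (fun n => f^[n] z) atTop (𝓝 b) := by
  have hin : ∀ n, f^[n] z ∈ Icc p b := iter_in hf hpb hfb hfgt hz
  have hmn : Monotone fun n => f^[n] z := by
    apply monotone_nat_of_le_succ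
    intro n
    rw [Function.iterate_succ_apply']
    exact (fstep hf hpb hfb hfgt _ (hin n)).1
  have hbdd : BddAbove (range fun n => f^[n] z) := by
    refine ⟨b, ?_⟩
    rintro y ⟨n, rfl⟩
    exact (hin n).2
  have htend := tendsto_atTop_ciSup hmn hbdd
  set L := ⨆ n, f^[n] z with hL
  have hLb : L ≤ b := ciSup_le fun n => (hin n).2
  have hpL : p ≤ L := le_trans (hin 0).1 (le_ciSup hbdd 0)
  have hfL : f L = L := by
    have h1 : Tendsto (fun n => f (f^[n] z)) atTop (𝓝 (f L)) :=
      (hf.2.1.continuous.tendsto L).comp htend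
    have h2 : Tendsto (fun n => f^[n+1] z) atTop (𝓝 L) :=
      htend.comp (tendsto_add_atTop_nat 1)
    have h3 : (fun n => f^[n+1] z) = fun n => f (f^[n] z) := by
      funext n; rw [Function.iterate_succ_apply']
    rw [h3] at h2
    exact (tendsto_nhds_unique h2 h1).symm
  have : L = b := by
    rcases eq_or_lt_of_le hLb with h | h
    · exact h
    · exact absurd hfL (ne_of_gt (hfgt L hpL h))
  rwa [this] at htend

end helpers

noncomputable def DI (f : ℝ → ℝ) (n : ℕ) (x : ℝ) : ℝ := ∏ j ∈ Finset.range n, deriv f (f^[j] x)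

lemma hdIter (f : ℝ → ℝ) (hf : IsDiffeoR 2 f) (n : ℕ) (x : ℝ) :
    HasDerivAt f^[n] (DI f n x) x := by
  induction n with
  | zero => simpa [DI] using hasDerivAt_id x
  | succ n ih =>
    have h1 : HasDerivAt (f ∘ f^[n]) (deriv f (f^[n] x) * DI f n x) x :=
      (hd f hf (f^[n] x)).comp x ih
    have h2 : f^[n+1] = f ∘ f^[n] := Function.iterate_succ' f n
    rw [h2]
    have h3 : DI f (n+1) x = deriv f (f^[n] x) * DI f n x := by
      simp only [DI, Finset.prod_range_succ]
      ring
    rw [h3]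
    exact h1

lemma DIpos (f : ℝ → ℝ) (hf : IsDiffeoR 2 f) (n : ℕ) (x : ℝ) : 0 < DI f n x :=
  Finset.prod_pos fun j _ => hf.2.2 _

lemma DIcont (f : ℝ → ℝ) (hf : IsDiffeoR 2 f) (n : ℕ) : Continuous (fun x => DI f n x) := by
  unfold DI
  exact continuous_finset_prod _ fun j _ =>
    (hf.2.1.continuous_deriv (by norm_num)).comp (hf.2.1.continuous.iterate j)

lemma DI_fixed (f : ℝ → ℝ) (n : ℕ) {x : ℝ} (hx : f x = x) (hdx : deriv f x = 1) :
    DI f n x = 1 := by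
  have hit : ∀ j, f^[j] x = x := by
    intro j
    induction j with
    | zero => rfl
    | succ j ih => rw [Function.iterate_succ_apply', ih, hx]
  unfold DI
  rw [Finset.prod_congr rfl fun j _ => by rw [hit j, hdx]]
  simp

lemma contderiv (f : ℝ → ℝ) (hf : IsDiffeoR 2 f) : Continuous (deriv f) :=
  hf.2.1.continuous_deriv (by norm_num)

lemma cd1deriv (f : ℝ → ℝ) (hf : IsDiffeoR 2 f) : ContDiff ℝ 1 (deriv f) := by
  have h2 : ContDiff ℝ ((1 : ℕ) + 1 : WithTop ℕ∞) f := by exact_mod_cast hf.2.1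
  exact (contDiff_succ_iff_deriv.mp h2).2.2

lemma exists_inv (f : ℝ → ℝ) (hf : IsDiffeoR 2 f) :
    ∃ fi : ℝ → ℝ, IsDiffeoR 2 fi ∧ (∀ x, fi (f x) = x) ∧ (∀ x, f (fi x) = x) := by
  have hmono := mono f hf
  let e := StrictMono.orderIsoOfSurjective f hmono hf.1.2
  have hli : ∀ x, e.symm (f x) = x := fun x => e.symm_apply_apply x
  have hri : ∀ x, f (e.symm x) = x := fun x => e.apply_symm_apply x
  have hcont : Continuous ⇑e.symm := OrderIso.continuous _
  have hder : ∀ x, HasDerivAt ⇑e.symm ((deriv f (e.symm x))⁻¹) x := by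
    intro x
    exact HasDerivAt.of_local_left_inverse hcont.continuousAt (hd f hf (e.symm x))
      (ne_of_gt (hf.2.2 _)) (Eventually.of_forall hri)
  have hdiff : Differentiable ℝ ⇑e.symm := fun x => (hder x).differentiableAt
  have hderiv_eq : deriv ⇑e.symm = fun x => (deriv f (e.symm x))⁻¹ :=
    funext fun x => (hder x).deriv
  have hc1 : ContDiff ℝ 1 ⇑e.symm := by
    rw [contDiff_one_iff_deriv, hderiv_eq]
    exact ⟨hdiff, ((contderiv f hf).comp hcont).inv₀ fun x => ne_of_gt (hf.2.2 _)⟩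
  have hc2 : ContDiff ℝ 2 ⇑e.symm := by
    have h12 : ContDiff ℝ ((1 : ℕ) + 1 : WithTop ℕ∞) ⇑e.symm := by
      rw [contDiff_succ_iff_deriv, hderiv_eq]
      refine ⟨hdiff, by simp, ?_⟩
      have hinv : ContDiff ℝ 1 (fun y : ℝ => (deriv f y)⁻¹) := by
        rw [contDiff_iff_contDiffAt]
        intro y
        exact ((cd1deriv f hf).contDiffAt).inv (ne_of_gt (hf.2.2 y))
      exact hinv.comp hc1
    exact_mod_cast h12
  refine ⟨⇑e.symm, ⟨e.symm.bijective, hc2, fun x => ?_⟩, hli, hri⟩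
  rw [(hder x).deriv]
  exact inv_pos.mpr (hf.2.2 _)

lemma neg_conj (f : ℝ → ℝ) (hf : IsDiffeoR 2 f) : IsDiffeoR 2 (fun x => -f (-x)) := by
  have hder : ∀ x : ℝ, HasDerivAt (fun x => -f (-x)) (deriv f (-x)) x := by
    intro x
    have h1 : HasDerivAt (fun x : ℝ => f (-x)) (deriv f (-x) * (-1)) x :=
      (hd f hf (-x)).comp x (hasDerivAt_neg x)
    have : HasDerivAt (fun x => -f (-x)) (-(deriv f (-x) * (-1))) x := h1.neg
    simpa using this
  refine ⟨?_, ?_, ?_⟩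
  · have h : (fun x => -f (-x)) = Neg.neg ∘ f ∘ Neg.neg := rfl
    rw [h]
    exact neg_involutive.bijective.comp (hf.1.comp neg_involutive.bijective)
  · have h : (fun x => -f (-x)) = Neg.neg ∘ f ∘ Neg.neg := rfl
    rw [h]
    exact (contDiff_neg.comp hf.2.1).comp contDiff_neg
  · intro x
    rw [(hder x).deriv]
    exact hf.2.2 _

lemma kopell_core (f g : ℝ → ℝ) (hf : IsDiffeoR 2 f) (hg : IsDiffeoR 2 g)
    (hcomm : ∀ x, f (g x) = g (f x))
    (b p : ℝ) (hpb : p < b) (hfb : f b = b)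
    (hfgt : ∀ y, p ≤ y → y < b → y < f y)
    (hgp : g p = p) :
    ∀ x ∈ Icc p (f p), g x = x := by
  have fm := mono f hf
  have gm := mono g hg
  set q := f p with hq
  have hpq : p < q := hfgt p le_rfl hpb
  have hqb : q < b := by
    have := fm hpb
    rwa [hfb] at this
  have hsub : Icc p q ⊆ Icc p b := Icc_subset_Icc le_rfl hqb.le
  -- iterates of p
  have hiterp : ∀ n : ℕ, f^[n] p ∈ Icc p b :=
    iter_in hf hpb hfb hfgt ⟨le_rfl, hpb.le⟩
  have hiterplt : ∀ n : ℕ, f^[n] p < b := by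
    intro n
    induction n with
    | zero => exact hpb
    | succ n ih =>
      rw [Function.iterate_succ_apply']
      have := fm ih
      rwa [hfb] at this
  have hiterpstep : ∀ n : ℕ, f^[n] p < f^[n+1] p := by
    intro n
    rw [Function.iterate_succ_apply']
    exact hfgt _ (hiterp n).1 (hiterplt n)
  have gfixiter : ∀ n : ℕ, g (f^[n] p) = f^[n] p := by
    intro n
    induction n with
    | zero => exact hgp
    | succ n ih =>
      rw [Function.iterate_succ_apply', ← hcomm, ih]
  have hptend : Tendsto (fun n => f^[n] p) atTop (𝓝 b) :=
    iter_tendsto hf hpb hfb hfgt ⟨le_rfl, hpb.le⟩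
  have hptend1 : Tendsto (fun n => f^[n+1] p) atTop (𝓝 b) :=
    hptend.comp (tendsto_add_atTop_nat 1)
  have hgb : g b = b := by
    have h1 : Tendsto (fun n => g (f^[n] p)) atTop (𝓝 (g b)) :=
      (hg.2.1.continuous.tendsto b).comp hptend
    have h2 : (fun n => g (f^[n] p)) = fun n => f^[n] p := funext gfixiter
    rw [h2] at h1
    exact tendsto_nhds_unique h1 hptend
  -- derivative of g at b is 1
  have hdgb : deriv g b = 1 := by
    have hex : ∀ n : ℕ, ∃ c, c ∈ Ioo (f^[n] p) (f^[n+1] p) ∧ deriv g c = 1 := by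
      intro n
      obtain ⟨c, hc, hceq⟩ := exists_hasDerivAt_eq_slope g (deriv g) (hiterpstep n)
        (hg.2.1.continuous.continuousOn) (fun x _ => hd g hg x)
      refine ⟨c, hc, ?_⟩
      rw [hceq, gfixiter, gfixiter, div_self (ne_of_gt (sub_pos.mpr (hiterpstep n)))]
    choose η hη1 hη2 using hex
    have hηtend : Tendsto η atTop (𝓝 b) :=
      tendsto_of_tendsto_of_tendsto_of_le_of_le hptend hptend1
        (fun n => (hη1 n).1.le) (fun n => (hη1 n).2.le)
    have h1 : Tendsto (fun n => deriv g (η n)) atTop (𝓝 (deriv g b)) :=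
      ((contderiv g hg).tendsto b).comp hηtend
    have h2 : (fun n => deriv g (η n)) = fun _ => (1:ℝ) := funext hη2
    rw [h2] at h1
    exact (tendsto_nhds_unique h1 tendsto_const_nhds)
  -- Lipschitz constant for log ∘ deriv f on [p, b]
  obtain ⟨C, hC⟩ : ∃ C, ∀ x ∈ Icc p b, ‖(deriv f x)⁻¹ * deriv (deriv f) x‖ ≤ C := by
    apply isCompact_Icc.exists_bound_of_continuousOn
    exact Continuous.continuousOn
      (((contderiv f hf).inv₀ fun x => ne_of_gt (hf.2.2 x)).mul
        ((cd1deriv f hf).continuous_deriv le_rfl))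
  have hC0 : 0 ≤ C := le_trans (norm_nonneg _) (hC p ⟨le_rfl, hpb.le⟩)
  have hφd : ∀ x : ℝ, HasDerivAt (fun y => Real.log (deriv f y))
      ((deriv f x)⁻¹ * deriv (deriv f) x) x := by
    intro x
    have hdd : HasDerivAt (deriv f) (deriv (deriv f) x) x :=
      (((cd1deriv f hf).differentiable one_ne_zero) x).hasDerivAt
    exact (Real.hasDerivAt_log (ne_of_gt (hf.2.2 x))).comp x hdd
  have hLip : ∀ u ∈ Icc p b, ∀ v ∈ Icc p b,
      |Real.log (deriv f v) - Real.log (deriv f u)| ≤ C * |v - u| := by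
    intro u hu v hv
    have := (convex_Icc p b).norm_image_sub_le_of_norm_hasDerivWithin_le
      (f := fun y => Real.log (deriv f y))
      (f' := fun x => (deriv f x)⁻¹ * deriv (deriv f) x)
      (fun x _ => (hφd x).hasDerivWithinAt) hC hu hv
    simpa [Real.norm_eq_abs] using this
  set K := Real.exp (C * (b - p)) with hK
  have hK1 : 1 ≤ K := Real.one_le_exp (mul_nonneg hC0 (sub_pos.mpr hpb).le)
  have hK0 : 0 < K := Real.exp_pos _
  -- distortion estimate
  have hdist : ∀ z ∈ Icc p q, ∀ y ∈ Icc p q, ∀ n : ℕ, DI f n y ≤ K * DI f n z := by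
    intro z hz y hy n
    have hiterz : ∀ j : ℕ, f^[j] z ∈ Icc p b := iter_in hf hpb hfb hfgt (hsub hz)
    have hitery : ∀ j : ℕ, f^[j] y ∈ Icc p b := iter_in hf hpb hfb hfgt (hsub hy)
    have hmonoj : ∀ j : ℕ, Monotone f^[j] := fun j => fm.monotone.iterate j
    have hterm : ∀ j : ℕ, Real.log (deriv f (f^[j] y)) - Real.log (deriv f (f^[j] z))
        ≤ C * (f^[j+1] p - f^[j] p) := by
      intro j
      have h1 := hLip _ (hiterz j) _ (hitery j)
      have hzj1 : f^[j] p ≤ f^[j] z := hmonoj j hz.1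
      have hzj2 : f^[j] z ≤ f^[j] q := hmonoj j hz.2
      have hyj1 : f^[j] p ≤ f^[j] y := hmonoj j hy.1
      have hyj2 : f^[j] y ≤ f^[j] q := hmonoj j hy.2
      have hfq : f^[j] q = f^[j+1] p := (Function.iterate_succ_apply f j p).symm
      rw [hfq] at hzj2 hyj2
      have habs : |f^[j] y - f^[j] z| ≤ f^[j+1] p - f^[j] p :=
        abs_sub_le_iff.mpr ⟨by linarith, by linarith⟩
      calc Real.log (deriv f (f^[j] y)) - Real.log (deriv f (f^[j] z))
          ≤ |Real.log (deriv f (f^[j] y)) - Real.log (deriv f (f^[j] z))| := le_abs_self _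
        _ ≤ C * |f^[j] y - f^[j] z| := h1
        _ ≤ C * (f^[j+1] p - f^[j] p) := mul_le_mul_of_nonneg_left habs hC0
    have hsum : Real.log (DI f n y) - Real.log (DI f n z) ≤ C * (b - p) := by
      have hly : Real.log (DI f n y) = ∑ j ∈ Finset.range n, Real.log (deriv f (f^[j] y)) :=
        Real.log_prod fun j _ => ne_of_gt (hf.2.2 _)
      have hlz : Real.log (DI f n z) = ∑ j ∈ Finset.range n, Real.log (deriv f (f^[j] z)) :=
        Real.log_prod fun j _ => ne_of_gt (hf.2.2 _)
      rw [hly, hlz, ← Finset.sum_sub_distrib]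
      calc ∑ j ∈ Finset.range n,
            (Real.log (deriv f (f^[j] y)) - Real.log (deriv f (f^[j] z)))
          ≤ ∑ j ∈ Finset.range n, C * (f^[j+1] p - f^[j] p) :=
            Finset.sum_le_sum fun j _ => hterm j
        _ = C * (f^[n] p - p) := by
            rw [← Finset.mul_sum, Finset.sum_range_sub (fun j => f^[j] p)]
            simp
        _ ≤ C * (b - p) := by
            have := (hiterp n).2
            apply mul_le_mul_of_nonneg_left _ hC0
            linarith
    have h1 : DI f n y = Real.exp (Real.log (DI f n y)) :=
      (Real.exp_log (DIpos f hf n y)).symm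
    rw [h1]
    calc Real.exp (Real.log (DI f n y))
        ≤ Real.exp (C * (b - p) + Real.log (DI f n z)) := by
          apply Real.exp_le_exp.mpr
          linarith
      _ = K * DI f n z := by rw [Real.exp_add, Real.exp_log (DIpos f hf n z)]
  -- g preserves the fundamental domain [p, q]
  have hgq : g q = q := by
    rw [hq, ← hcomm, hgp]
  have gkpres : ∀ z ∈ Icc p q, ∀ k : ℕ, g^[k] z ∈ Icc p q := by
    intro z hz k
    induction k with
    | zero => simpa using hz
    | succ k ih =>
      rw [Function.iterate_succ_apply']
      constructor
      · have := gm.monotone ih.1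
        rwa [hgp] at this
      · have := gm.monotone ih.2
        rwa [hgq] at this
  -- chain rule identity from commutation
  have hnk : ∀ (n k : ℕ) (x : ℝ), f^[n] (g^[k] x) = g^[k] (f^[n] x) := by
    have h1 : ∀ (n : ℕ) (x : ℝ), f^[n] (g x) = g (f^[n] x) := by
      intro n
      induction n with
      | zero => intro x; simp
      | succ n ih =>
        intro x
        rw [Function.iterate_succ_apply', Function.iterate_succ_apply', ih x, ← hcomm]
    intro n k
    induction k with
    | zero => intro x; simp
    | succ k ih =>
      intro x
      rw [Function.iterate_succ_apply, Function.iterate_succ_apply, ih (g x), h1 n x]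
  have hchain : ∀ (n k : ℕ) (z : ℝ),
      DI f n (g^[k] z) * DI g k z = DI g k (f^[n] z) * DI f n z := by
    intro n k z
    have h1 : HasDerivAt (f^[n] ∘ g^[k]) (DI f n (g^[k] z) * DI g k z) z :=
      (hdIter f hf n (g^[k] z)).comp z (hdIter g hg k z)
    have h2 : HasDerivAt (g^[k] ∘ f^[n]) (DI g k (f^[n] z) * DI f n z) z :=
      (hdIter g hg k (f^[n] z)).comp z (hdIter f hf n z)
    have heq : f^[n] ∘ g^[k] = g^[k] ∘ f^[n] := funext (hnk n k)
    rw [heq] at h1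
    exact h1.unique h2
  -- uniform lower bound on derivatives of iterates of g on [p, q]
  have hlow : ∀ z ∈ Icc p q, ∀ k : ℕ, 1 ≤ K * DI g k z := by
    intro z hz k
    have h1 : ∀ n : ℕ, DI g k (f^[n] z) ≤ K * DI g k z := by
      intro n
      have hc := hchain n k z
      have hd8 := hdist z hz (g^[k] z) (gkpres z hz k) n
      have hp1 := DIpos f hf n z
      have hp2 := DIpos g hg k z
      nlinarith [DIpos g hg k (f^[n] z)]
    have h2 : Tendsto (fun n => DI g k (f^[n] z)) atTop (𝓝 1) := by
      have h3 : Tendsto (fun n => DI g k (f^[n] z)) atTop (𝓝 (DI g k b)) :=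
        ((DIcont g hg k).tendsto b).comp (iter_tendsto hf hpb hfb hfgt (hsub hz))
      rwa [DI_fixed g k hgb hdgb] at h3
    exact le_of_tendsto h2 (Eventually.of_forall h1)
  -- final contradiction
  rintro x ⟨hpx, hxq⟩
  by_contra hne
  have hxIcc : x ∈ Icc p q := ⟨hpx, hxq⟩
  have hu_in : ∀ k : ℕ, g^[k] x ∈ Icc p q := gkpres x hxIcc
  have hgx : g x ∈ Icc p q := by
    have := hu_in 1
    simpa using this
  obtain ⟨α, β, hαβ, hαm, hβm, hslope0⟩ :
      ∃ α β, α < β ∧ α ∈ Icc p q ∧ β ∈ Icc p q ∧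
        Tendsto (fun k => (g^[k] β - g^[k] α) / (β - α)) atTop (𝓝 0) := by
    rcases (Ne.lt_or_gt hne) with hlt | hlt
    · -- g x < x : decreasing orbit
      refine ⟨g x, x, hlt, hgx, hxIcc, ?_⟩
      set u := fun k => g^[k] x with hu
      have hmu : Antitone u := by
        apply antitone_nat_of_succ_le
        intro k
        rw [hu]
        simp only
        rw [Function.iterate_succ_apply]
        exact (gm.monotone.iterate k) hlt.le
      have hbdd : BddBelow (range u) := by
        refine ⟨p, ?_⟩
        rintro y ⟨k, rfl⟩
        exact (hu_in k).1
      have htu := tendsto_atTop_ciInf hmu hbdd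
      have htu1 : Tendsto (fun k => u (k+1)) atTop (𝓝 (⨅ k, u k)) :=
        htu.comp (tendsto_add_atTop_nat 1)
      have h0 := (htu.sub htu1).div_const (x - g x)
      rw [sub_self, zero_div] at h0
      have heq : (fun k => (g^[k] x - g^[k] (g x)) / (x - g x))
          = fun k => (u k - u (k+1)) / (x - g x) := by
        funext k
        rw [hu]
        simp only
        rw [← Function.iterate_succ_apply]
      rw [heq]
      exact h0
    · -- x < g x : increasing orbit
      refine ⟨x, g x, hlt, hxIcc, hgx, ?_⟩
      set u := fun k => g^[k] x with hu
      have hmu : Monotone u := by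
        apply monotone_nat_of_le_succ
        intro k
        rw [hu]
        simp only
        rw [Function.iterate_succ_apply]
        exact (gm.monotone.iterate k) hlt.le
      have hbdd : BddAbove (range u) := by
        refine ⟨q, ?_⟩
        rintro y ⟨k, rfl⟩
        exact (hu_in k).2
      have htu := tendsto_atTop_ciSup hmu hbdd
      have htu1 : Tendsto (fun k => u (k+1)) atTop (𝓝 (⨆ k, u k)) :=
        htu.comp (tendsto_add_atTop_nat 1)
      have h0 := (htu1.sub htu).div_const (g x - x)
      rw [sub_self, zero_div] at h0
      have heq : (fun k => (g^[k] (g x) - g^[k] x) / (g x - x))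
          = fun k => (u (k+1) - u k) / (g x - x) := by
        funext k
        rw [hu]
        simp only
        rw [← Function.iterate_succ_apply]
      rw [heq]
      exact h0
  have hcmem : ∀ k : ℕ, ∃ c, c ∈ Ioo α β ∧ DI g k c = (g^[k] β - g^[k] α) / (β - α) := by
    intro k
    obtain ⟨c, hc, hceq⟩ := exists_hasDerivAt_eq_slope (g^[k]) (fun w => DI g k w) hαβ
      (hg.2.1.continuous.iterate k).continuousOn (fun w _ => hdIter g hg k w)
    exact ⟨c, hc, hceq⟩
  choose c hc1 hc2 using hcmem
  have hctend : Tendsto (fun k => DI g k (c k)) atTop (𝓝 0) := by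
    rw [funext hc2]
    exact hslope0
  have hclow : ∀ k, 1 ≤ K * DI g k (c k) := fun k =>
    hlow (c k) ⟨hαm.1.trans (hc1 k).1.le, (hc1 k).2.le.trans hβm.2⟩ k
  have hfin : Tendsto (fun k => K * DI g k (c k)) atTop (𝓝 (K * 0)) := hctend.const_mul K
  rw [mul_zero] at hfin
  have h1 : (1:ℝ) ≤ 0 := ge_of_tendsto hfin (Eventually.of_forall hclow)
  linarith

lemma comm_iter (f g : ℝ → ℝ) (h : ∀ x, f (g x) = g (f x)) :
    ∀ (n : ℕ) (x : ℝ), f^[n] (g x) = g (f^[n] x) := by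
  intro n
  induction n with
  | zero => intro x; simp
  | succ n ih =>
    intro x
    rw [Function.iterate_succ_apply', Function.iterate_succ_apply', ih x, ← h]

lemma kopell (f g : ℝ → ℝ) (hf : IsDiffeoR 2 f) (hg : IsDiffeoR 2 g)
    (hcomm : ∀ x, f (g x) = g (f x))
    (b p : ℝ) (hpb : p < b) (hfb : f b = b)
    (hfgt : ∀ y, p ≤ y → y < b → y < f y)
    (hgp : g p = p) :
    ∀ x ∈ Icc p b, g x = x := by
  have fm := mono f hf
  have gfixiter : ∀ n : ℕ, g (f^[n] p) = f^[n] p := by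
    intro n
    induction n with
    | zero => exact hgp
    | succ n ih => rw [Function.iterate_succ_apply', ← hcomm, ih]
  have hiterp : ∀ n : ℕ, f^[n] p ∈ Icc p b :=
    iter_in hf hpb hfb hfgt ⟨le_rfl, hpb.le⟩
  have hiterplt : ∀ n : ℕ, f^[n] p < b := by
    intro n
    induction n with
    | zero => exact hpb
    | succ n ih =>
      rw [Function.iterate_succ_apply']
      have := fm ih
      rwa [hfb] at this
  have hptend : Tendsto (fun n => f^[n] p) atTop (𝓝 b) :=
    iter_tendsto hf hpb hfb hfgt ⟨le_rfl, hpb.le⟩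
  rintro x ⟨hpx, hxb⟩
  rcases eq_or_lt_of_le hxb with rfl | hxb'
  · -- x = b
    have h1 : Tendsto (fun n => g (f^[n] p)) atTop (𝓝 (g x)) :=
      (hg.2.1.continuous.tendsto x).comp hptend
    have h2 : (fun n => g (f^[n] p)) = fun n => f^[n] p := funext gfixiter
    rw [h2] at h1
    exact tendsto_nhds_unique h1 hptend
  · have hex : ∃ n, x < f^[n] p :=
      (hptend.eventually (eventually_gt_nhds hxb')).exists
    set N := Nat.find hex with hN
    have hN1 : x < f^[N] p := Nat.find_spec hex
    have hNne : N ≠ 0 := by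
      intro h0
      rw [h0] at hN1
      simp at hN1
      exact absurd hN1 (not_lt.mpr hpx)
    obtain ⟨m, hmeq⟩ : ∃ m, N = m + 1 := ⟨N - 1, (Nat.succ_pred_eq_of_ne_zero hNne).symm⟩
    have hm : ¬ x < f^[m] p := by
      apply Nat.find_min hex
      omega
    push_neg at hm
    have hcore := kopell_core f g hf hg hcomm b (f^[m] p) (hiterplt m) hfb
      (fun y hy hyb => hfgt y ((hiterp m).1.trans hy) hyb) (gfixiter m)
    apply hcore
    refine ⟨hm, ?_⟩
    rw [hmeq] at hN1
    rw [Function.iterate_succ_apply'] at hN1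
    exact hN1.le

lemma escape_up (f : ℝ → ℝ) (hcont : Continuous f) (a b x : ℝ)
    (hx : x ≤ a) (hlt : ∀ y, y ≤ a → y < f y) (hb : ∀ y, y ≤ a → f y ≤ b) :
    ∃ n, a < f^[n] x ∧ f^[n] x ≤ b := by
  have hex : ∃ n, a < f^[n] x := by
    by_contra hno
    push_neg at hno
    have hmn : Monotone fun n => f^[n] x := by
      apply monotone_nat_of_le_succ
      intro n
      rw [Function.iterate_succ_apply']
      exact (hlt _ (hno n)).le
    have hbdd : BddAbove (range fun n => f^[n] x) := by
      refine ⟨a, ?_⟩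
      rintro y ⟨n, rfl⟩
      exact hno n
    have htend := tendsto_atTop_ciSup hmn hbdd
    set L := ⨆ n, f^[n] x with hL
    have hLa : L ≤ a := ciSup_le hno
    have hfL : f L = L := by
      have h1 : Tendsto (fun n => f (f^[n] x)) atTop (𝓝 (f L)) :=
        (hcont.tendsto L).comp htend
      have h2 : Tendsto (fun n => f^[n+1] x) atTop (𝓝 L) :=
        htend.comp (tendsto_add_atTop_nat 1)
      have h3 : (fun n => f^[n+1] x) = fun n => f (f^[n] x) := by
        funext n; rw [Function.iterate_succ_apply']
      rw [h3] at h2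
      exact (tendsto_nhds_unique h1 h2)
    exact absurd hfL (ne_of_gt (hlt L hLa))
  set N := Nat.find hex with hN
  have hN1 : a < f^[N] x := Nat.find_spec hex
  have hNne : N ≠ 0 := by
    intro h0
    rw [h0] at hN1
    simp at hN1
    exact absurd hN1 (not_lt.mpr hx)
  obtain ⟨m, hmeq⟩ : ∃ m, N = m + 1 := ⟨N - 1, (Nat.succ_pred_eq_of_ne_zero hNne).symm⟩
  have hm : ¬ a < f^[m] x := by
    apply Nat.find_min hex
    omega
  push_neg at hm
  refine ⟨N, hN1, ?_⟩
  rw [hmeq, Function.iterate_succ_apply']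
  exact hb _ hm

lemma escape_down (f : ℝ → ℝ) (hcont : Continuous f) (a c x : ℝ)
    (hx : a ≤ x) (hlt : ∀ y, a ≤ y → f y < y) (hc : ∀ y, a ≤ y → c ≤ f y) :
    ∃ n, f^[n] x < a ∧ c ≤ f^[n] x := by
  have hex : ∃ n, f^[n] x < a := by
    by_contra hno
    push_neg at hno
    have hmn : Antitone fun n => f^[n] x := by
      apply antitone_nat_of_succ_le
      intro n
      rw [Function.iterate_succ_apply']
      exact (hlt _ (hno n)).le
    have hbdd : BddBelow (range fun n => f^[n] x) := by
      refine ⟨a, ?_⟩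
      rintro y ⟨n, rfl⟩
      exact hno n
    have htend := tendsto_atTop_ciInf hmn hbdd
    set L := ⨅ n, f^[n] x with hL
    have hLa : a ≤ L := le_ciInf hno
    have hfL : f L = L := by
      have h1 : Tendsto (fun n => f (f^[n] x)) atTop (𝓝 (f L)) :=
        (hcont.tendsto L).comp htend
      have h2 : Tendsto (fun n => f^[n+1] x) atTop (𝓝 L) :=
        htend.comp (tendsto_add_atTop_nat 1)
      have h3 : (fun n => f^[n+1] x) = fun n => f (f^[n] x) := by
        funext n; rw [Function.iterate_succ_apply']
      rw [h3] at h2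
      exact (tendsto_nhds_unique h1 h2)
    exact absurd hfL (ne_of_lt (hlt L hLa))
  set N := Nat.find hex with hN
  have hN1 : f^[N] x < a := Nat.find_spec hex
  have hNne : N ≠ 0 := by
    intro h0
    rw [h0] at hN1
    simp at hN1
    exact absurd hN1 (not_lt.mpr hx)
  obtain ⟨m, hmeq⟩ : ∃ m, N = m + 1 := ⟨N - 1, (Nat.succ_pred_eq_of_ne_zero hNne).symm⟩
  have hm : ¬ f^[m] x < a := by
    apply Nat.find_min hex
    omega
  push_neg at hm
  refine ⟨N, hN1, ?_⟩
  rw [hmeq, Function.iterate_succ_apply']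
  exact hc _ hm

/-- Mirrored Kopell: `c` is a fixed point of `f`, `f > id` on `(c, a]`, `g` fixes `a`;
then `g` is the identity on `[c, a]`. -/
lemma kopell_left (f g : ℝ → ℝ) (hf : IsDiffeoR 2 f) (hg : IsDiffeoR 2 g)
    (hcomm : ∀ x, f (g x) = g (f x))
    (c a : ℝ) (hca : c < a) (hfc : f c = c)
    (hflt : ∀ y, c < y → y ≤ a → y < f y)
    (hga : g a = a) :
    ∀ x ∈ Icc c a, g x = x := by
  obtain ⟨fi, hfi, hfil, hfir⟩ := exists_inv f hf
  have fim := mono fi hfi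
  have hficomm : ∀ x, fi (g x) = g (fi x) := by
    intro x
    have h1 : f (g (fi x)) = g x := by rw [hcomm, hfir]
    calc fi (g x) = fi (f (g (fi x))) := by rw [h1]
      _ = g (fi x) := hfil _
  have hfic : fi c = c := by
    calc fi c = fi (f c) := by rw [hfc]
      _ = c := hfil c
  -- the negated conjugates
  set F : ℝ → ℝ := fun x => -fi (-x) with hF
  set G : ℝ → ℝ := fun x => -g (-x) with hG
  have hFd : IsDiffeoR 2 F := neg_conj fi hfi
  have hGd : IsDiffeoR 2 G := neg_conj g hg
  have hFGcomm : ∀ x, F (G x) = G (F x) := by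
    intro x
    simp only [hF, hG, neg_neg]
    rw [hficomm]
  have hFb : F (-c) = -c := by
    simp only [hF, neg_neg, hfic]
  have hGp : G (-a) = -a := by
    simp only [hG, neg_neg, hga]
  have hFgt : ∀ y, -a ≤ y → y < -c → y < F y := by
    intro y h1 h2
    have hw1 : c < -y := by linarith
    have hw2 : -y ≤ a := by linarith
    have h3 : -y < f (-y) := hflt _ hw1 hw2
    have h4 : fi (-y) < -y := by
      have := fim h3
      rwa [hfil] at this
    simp only [hF]
    linarith
  have hres := kopell F G hFd hGd hFGcomm (-c) (-a) (by linarith) hFb hFgt hGp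
  rintro x ⟨hcx, hxa⟩
  have := hres (-x) ⟨by linarith, by linarith⟩
  simp only [hG, neg_neg] at this
  linarith

/-- Key lemma: if `g a = a`, `a < f a`, and `f` has a fixed point, then `a` is interior
to the fixed point set of `g`. -/
lemma key (f g : ℝ → ℝ) (hf : IsDiffeoR 2 f) (hg : IsDiffeoR 2 g)
    (hcomm : ∀ x, f (g x) = g (f x)) (hfixf : ∃ z : ℝ, f z = z)
    (a : ℝ) (hga : g a = a) (hfa : a < f a) :
    a ∈ interior {y : ℝ | g y = y} := by
  have fm := mono f hf
  have hfcont := hf.2.1.continuous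
  have hfane : f a ≠ a := ne_of_gt hfa
  obtain ⟨fi, hfi, hfil, hfir⟩ := exists_inv f hf
  have fim := mono fi hfi
  have hficomm : ∀ x, fi (g x) = g (fi x) := by
    intro x
    have h1 : f (g (fi x)) = g x := by rw [hcomm, hfir]
    calc fi (g x) = fi (f (g (fi x))) := by rw [h1]
      _ = g (fi x) := hfil _
  -- IVT helpers
  have hIVT : ∀ u v : ℝ, u ≤ v → u ≤ f u → f v ≤ v → ∃ t ∈ Icc u v, f t = t := by
    intro u v huv h1 h2
    have hcont : ContinuousOn (fun t => f t - t) (Icc u v) :=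
      (hfcont.sub continuous_id).continuousOn
    have h0 : (0:ℝ) ∈ Icc ((fun t => f t - t) v) ((fun t => f t - t) u) := by
      constructor
      · show f v - v ≤ 0
        linarith
      · show 0 ≤ f u - u
        linarith
    obtain ⟨t, ht, hteq⟩ := intermediate_value_Icc' huv hcont h0
    refine ⟨t, ht, ?_⟩
    have ht' : f t - t = 0 := hteq
    linarith
  have hIVT2 : ∀ u v : ℝ, u ≤ v → f u ≤ u → v ≤ f v → ∃ t ∈ Icc u v, f t = t := by
    intro u v huv h1 h2
    have hcont : ContinuousOn (fun t => f t - t) (Icc u v) :=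
      (hfcont.sub continuous_id).continuousOn
    have h0 : (0:ℝ) ∈ Icc ((fun t => f t - t) u) ((fun t => f t - t) v) := by
      constructor
      · show f u - u ≤ 0
        linarith
      · show 0 ≤ f v - v
        linarith
    obtain ⟨t, ht, hteq⟩ := intermediate_value_Icc huv hcont h0
    refine ⟨t, ht, ?_⟩
    have ht' : f t - t = 0 := hteq
    linarith
  by_cases hUp : ∃ z, f z = z ∧ a < z
  -- ===================== CASE: fixed point of f above a =====================
  · obtain ⟨z, hz1, hz2⟩ := hUp
    set T := {w : ℝ | f w = w} ∩ Ici a with hT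
    have hTne : T.Nonempty := ⟨z, hz1, hz2.le⟩
    have hTcl : IsClosed T := (isClosed_eq hfcont continuous_id).inter isClosed_Ici
    have hTbdd : BddBelow T := ⟨a, fun t ht => ht.2⟩
    set b := sInf T with hb
    have hbT : b ∈ T := hTcl.csInf_mem hTne hTbdd
    have hbfix : f b = b := hbT.1
    have hble : a ≤ b := hbT.2
    have hab : a < b := by
      rcases eq_or_lt_of_le hble with h | h
      · exfalso
        apply hfane
        rw [h]
        exact hbfix
      · exact h
    have hfab : f a ≤ b := by
      have := fm hab
      rw [hbfix] at this
      exact this.le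
    have hfgt : ∀ y, a ≤ y → y < b → y < f y := by
      intro y h1 h2
      by_contra hle
      push_neg at hle
      obtain ⟨t, ⟨ht1, ht2⟩, ht3⟩ := hIVT a y h1 hfa.le hle
      have : b ≤ t := csInf_le hTbdd ⟨ht3, ht1⟩
      linarith
    -- g is the identity on [a, b]
    have hid1 : ∀ x ∈ Icc a b, g x = x :=
      kopell f g hf hg hcomm b a hab hbfix hfgt hga
    by_cases hDown : ∃ w, f w = w ∧ w < a
    · -- fixed point of f below a as well
      obtain ⟨w, hw1, hw2⟩ := hDown
      set S := {v : ℝ | f v = v} ∩ Iic a with hS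
      have hSne : S.Nonempty := ⟨w, hw1, hw2.le⟩
      have hScl : IsClosed S := (isClosed_eq hfcont continuous_id).inter isClosed_Iic
      have hSbdd : BddAbove S := ⟨a, fun t ht => ht.2⟩
      set cc := sSup S with hcc
      have hccS : cc ∈ S := hScl.csSup_mem hSne hSbdd
      have hccfix : f cc = cc := hccS.1
      have hccle : cc ≤ a := hccS.2
      have hca : cc < a := by
        rcases eq_or_lt_of_le hccle with h | h
        · exfalso
          apply hfane
          rw [← h]
          exact hccfix
        · exact h
      have hflt : ∀ y, cc < y → y ≤ a → y < f y := by
        intro y h1 h2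
        by_contra hle
        push_neg at hle
        obtain ⟨t, ⟨ht1, ht2⟩, ht3⟩ := hIVT2 y a h2 hle hfa.le
        have : t ≤ cc := le_csSup hSbdd ⟨ht3, ht2⟩
        linarith
      have hid2 : ∀ x ∈ Icc cc a, g x = x :=
        kopell_left f g hf hg hcomm cc a hca hccfix hflt hga
      -- a is interior
      apply mem_interior.mpr
      refine ⟨Ioo cc b, ?_, isOpen_Ioo, ⟨hca, hab⟩⟩
      rintro y ⟨hy1, hy2⟩
      rcases le_or_gt y a with h | h
      · exact hid2 y ⟨hy1.le, h⟩
      · exact hid1 y ⟨h.le, hy2.le⟩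
    · -- no fixed point of f below a : f > id on (-∞, a]
      push_neg at hDown
      have hnof : ∀ y, y ≤ a → y < f y := by
        intro y hy
        by_contra hle
        push_neg at hle
        obtain ⟨t, ⟨ht1, ht2⟩, ht3⟩ := hIVT2 y a hy hle hfa.le
        have hta : a ≤ t := hDown t ht3
        have hteq : t = a := le_antisymm ht2 hta
        apply hfane
        rw [hteq] at ht3
        exact ht3
      have hfyb : ∀ y, y ≤ a → f y ≤ b := fun y hy => (fm.monotone hy).trans hfab
      have hall : ∀ x, x ≤ a → g x = x := by
        intro x hx
        obtain ⟨n, hn1, hn2⟩ := escape_up f hfcont a b x hx hnof hfyb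
        have h1 : g (f^[n] x) = f^[n] x := hid1 _ ⟨hn1.le, hn2⟩
        have h2 : f^[n] (g x) = g (f^[n] x) := comm_iter f g hcomm n x
        rw [h1] at h2
        exact (fm.injective.iterate n) h2
      apply mem_interior.mpr
      refine ⟨Ioo (a-1) b, ?_, isOpen_Ioo, ⟨by linarith, hab⟩⟩
      rintro y ⟨hy1, hy2⟩
      rcases le_or_gt y a with h | h
      · exact hall y h
      · exact hid1 y ⟨h.le, hy2.le⟩
  -- ===================== CASE: no fixed point of f above a =====================
  · push_neg at hUp
    obtain ⟨w, hw1⟩ := hfixf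
    have hw2 : w < a := by
      rcases lt_or_ge w a with h | h
      · exact h
      · exfalso
        rcases eq_or_lt_of_le h with h' | h'
        · apply hfane
          rw [h']
          exact hw1
        · exact absurd h' (not_lt.mpr (hUp w hw1))
    set S := {v : ℝ | f v = v} ∩ Iic a with hS
    have hSne : S.Nonempty := ⟨w, hw1, hw2.le⟩
    have hScl : IsClosed S := (isClosed_eq hfcont continuous_id).inter isClosed_Iic
    have hSbdd : BddAbove S := ⟨a, fun t ht => ht.2⟩
    set cc := sSup S with hcc
    have hccS : cc ∈ S := hScl.csSup_mem hSne hSbdd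
    have hccfix : f cc = cc := hccS.1
    have hccle : cc ≤ a := hccS.2
    have hca : cc < a := by
      rcases eq_or_lt_of_le hccle with h | h
      · exfalso
        apply hfane
        rw [← h]
        exact hccfix
      · exact h
    -- f > id everywhere above cc
    have hflt : ∀ y, cc < y → y < f y := by
      intro y h1
      rcases le_or_gt y a with h2 | h2
      · by_contra hle
        push_neg at hle
        obtain ⟨t, ⟨ht1, ht2⟩, ht3⟩ := hIVT2 y a h2 hle hfa.le
        have : t ≤ cc := le_csSup hSbdd ⟨ht3, ht2⟩
        linarith
      · by_contra hle
        push_neg at hle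
        obtain ⟨t, ⟨ht1, ht2⟩, ht3⟩ := hIVT a y h2.le hfa.le hle
        rcases eq_or_lt_of_le ht1 with h' | h'
        · apply hfane
          rw [h']
          exact ht3
        · exact absurd h' (not_lt.mpr (hUp t ht3))
    have hid2 : ∀ x ∈ Icc cc a, g x = x :=
      kopell_left f g hf hg hcomm cc a hca hccfix (fun y h1 _ => hflt y h1) hga
    -- extend to the right of a using the inverse
    have hfi_lt : ∀ y, a ≤ y → fi y < y := by
      intro y hy
      have h1 : y < f y := hflt y (hca.trans_le hy)
      have := fim h1
      rwa [hfil] at this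
    have hfi_lb : ∀ y, a ≤ y → cc ≤ fi y := by
      intro y hy
      have hfic : fi cc = cc := by
        calc fi cc = fi (f cc) := by rw [hccfix]
          _ = cc := hfil cc
      have := fim.monotone (hccle.trans hy)
      rwa [hfic] at this
    have hall : ∀ x, a ≤ x → g x = x := by
      intro x hx
      obtain ⟨n, hn1, hn2⟩ := escape_down fi (hfi.2.1.continuous) a cc x hx hfi_lt hfi_lb
      have h1 : g (fi^[n] x) = fi^[n] x := hid2 _ ⟨hn2, hn1.le⟩
      have h2 : fi^[n] (g x) = g (fi^[n] x) := comm_iter fi g hficomm n x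
      rw [h1] at h2
      exact (fim.injective.iterate n) h2
    apply mem_interior.mpr
    refine ⟨Ioo cc (a+1), ?_, isOpen_Ioo, ⟨hca, by linarith⟩⟩
    rintro y ⟨hy1, hy2⟩
    rcases le_or_gt y a with h | h
    · exact hid2 y ⟨hy1.le, h⟩
    · exact hall y h.le

lemma frontier_subset (f g : ℝ → ℝ) (hf : IsDiffeoR 2 f) (hg : IsDiffeoR 2 g)
    (hcomm : ∀ x, f (g x) = g (f x)) (hfixf : ∃ z : ℝ, f z = z) :
    frontier {y : ℝ | g y = y} ⊆ {y : ℝ | f y = y} := by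
  intro a ha
  have hscl : IsClosed {y : ℝ | g y = y} := isClosed_eq hg.2.1.continuous continuous_id
  rw [hscl.frontier_eq] at ha
  obtain ⟨hga, hnint⟩ := ha
  by_contra hne
  have hga' : g a = a := hga
  rcases Ne.lt_or_gt hne with hlt | hlt
  · -- f a < a: use the negation conjugates
    obtain ⟨z, hz⟩ := hfixf
    have hkey := key (fun x => -f (-x)) (fun x => -g (-x)) (neg_conj f hf) (neg_conj g hg)
      (fun x => by simp only [neg_neg]; rw [hcomm]) ⟨-z, by simp [hz]⟩ (-a)
      (by simp [hga']) (by simp only [neg_neg]; linarith)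
    obtain ⟨U, hU1, hU2, hU3⟩ := mem_interior.mp hkey
    apply hnint
    apply mem_interior.mpr
    refine ⟨Neg.neg ⁻¹' U, ?_, hU2.preimage continuous_neg, by simpa using hU3⟩
    intro y hy
    have := hU1 hy
    simp only [mem_setOf_eq, neg_neg] at this
    show g y = y
    linarith
  · exact hnint (key f g hf hg hcomm hfixf a hga' hlt)

/-- The segment between `z` and `f z` lies in the fixed point set of `g`,
whenever `z` is fixed by `g`. -/
lemma segment_fix (f g : ℝ → ℝ) (hg : IsDiffeoR 2 g) (fm : StrictMono f)
    (hcomm : ∀ x, f (g x) = g (f x))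
    (hfr : frontier {y : ℝ | g y = y} ⊆ {y : ℝ | f y = y}) :
    ∀ z, g z = z → ∀ t, min z (f z) ≤ t → t ≤ max z (f z) → g t = t := by
  have hscl : IsClosed {y : ℝ | g y = y} := isClosed_eq hg.2.1.continuous continuous_id
  set s := {y : ℝ | g y = y} with hs
  intro z hz t h1 h2
  have hgfz : g (f z) = f z := by rw [← hcomm, hz]
  rcases le_total z (f z) with hzf | hzf
  · rw [min_eq_left hzf] at h1
    rw [max_eq_right hzf] at h2
    by_contra hne
    have htz : z < t := by
      rcases eq_or_lt_of_le h1 with h | h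
      · exact absurd (h ▸ hz) hne
      · exact h
    have htfz : t < f z := by
      rcases eq_or_lt_of_le h2 with h | h
      · exact absurd (h ▸ hgfz) hne
      · exact h
    set A := s ∩ Icc z t with hA
    have hAne : A.Nonempty := ⟨z, hz, le_rfl, htz.le⟩
    have hAcl : IsClosed A := hscl.inter isClosed_Icc
    have hAbdd : BddAbove A := ⟨t, fun v hv => hv.2.2⟩
    set u := sSup A with hu
    have huA : u ∈ A := hAcl.csSup_mem hAne hAbdd
    have hut : u < t := by
      rcases eq_or_lt_of_le huA.2.2 with h | h
      · exact absurd (h ▸ huA.1) hne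
      · exact h
    have hufr : u ∈ frontier s := by
      rw [hscl.frontier_eq]
      refine ⟨huA.1, ?_⟩
      intro hint
      obtain ⟨ε, hε, hball⟩ := Metric.mem_nhds_iff.mp (mem_interior_iff_mem_nhds.mp hint)
      rcases le_or_gt (u + ε/2) t with hcase | hcase
      · have hv : u + ε/2 ∈ A := by
          refine ⟨hball ?_, huA.2.1.trans (by linarith), hcase⟩
          rw [Real.ball_eq_Ioo]
          exact Set.mem_Ioo.mpr ⟨by linarith, by linarith⟩
        have := le_csSup hAbdd hv
        linarith
      · have hv : t ∈ s := by
          apply hball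
          rw [Real.ball_eq_Ioo]
          have := huA.2.2
          exact Set.mem_Ioo.mpr ⟨by linarith, by linarith⟩
        exact hne hv
    have hfu : f u = u := hfr hufr
    have : f z ≤ f u := fm.monotone huA.2.1
    rw [hfu] at this
    linarith
  · rw [min_eq_right hzf] at h1
    rw [max_eq_left hzf] at h2
    by_contra hne
    have htz : t < z := by
      rcases eq_or_lt_of_le h2 with h | h
      · exact absurd (h.symm ▸ hz) hne
      · exact h
    have htfz : f z < t := by
      rcases eq_or_lt_of_le h1 with h | h
      · exact absurd (h ▸ hgfz) hne
      · exact h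
    set A := s ∩ Icc t z with hA
    have hAne : A.Nonempty := ⟨z, hz, htz.le, le_rfl⟩
    have hAcl : IsClosed A := hscl.inter isClosed_Icc
    have hAbdd : BddBelow A := ⟨t, fun v hv => hv.2.1⟩
    set u := sInf A with hu
    have huA : u ∈ A := hAcl.csInf_mem hAne hAbdd
    have hut : t < u := by
      rcases eq_or_lt_of_le huA.2.1 with h | h
      · exact absurd (h.symm ▸ huA.1) hne
      · exact h
    have hufr : u ∈ frontier s := by
      rw [hscl.frontier_eq]
      refine ⟨huA.1, ?_⟩
      intro hint
      obtain ⟨ε, hε, hball⟩ := Metric.mem_nhds_iff.mp (mem_interior_iff_mem_nhds.mp hint)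
      rcases le_or_gt t (u - ε/2) with hcase | hcase
      · have hv : u - ε/2 ∈ A := by
          refine ⟨hball ?_, hcase, (by linarith : u - ε/2 ≤ u).trans huA.2.2⟩
          rw [Real.ball_eq_Ioo]
          exact Set.mem_Ioo.mpr ⟨by linarith, by linarith⟩
        have := csInf_le hAbdd hv
        linarith
      · have hv : t ∈ s := by
          apply hball
          rw [Real.ball_eq_Ioo]
          have := huA.2.1
          exact Set.mem_Ioo.mpr ⟨by linarith, by linarith⟩
        exact hne hv
    have hfu : f u = u := hfr hufr
    have : f u ≤ f z := fm.monotone huA.2.2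
    rw [hfu] at this
    linarith

lemma comp_preserved (f g : ℝ → ℝ) (hf : IsDiffeoR 2 f) (hg : IsDiffeoR 2 g)
    (hcomm : ∀ x, f (g x) = g (f x)) (hfixf : ∃ z : ℝ, f z = z) :
    ∀ x ∈ {y : ℝ | g y = y},
      f '' connectedComponentIn {y : ℝ | g y = y} x
        = connectedComponentIn {y : ℝ | g y = y} x := by
  intro x hx
  set s := {y : ℝ | g y = y} with hs
  set C := connectedComponentIn s x with hC
  have hCs : C ⊆ s := connectedComponentIn_subset s x
  have hCpre : IsPreconnected C := isPreconnected_connectedComponentIn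
  have hxC : x ∈ C := mem_connectedComponentIn hx
  have fm := mono f hf
  obtain ⟨fi, hfi, hfil, hfir⟩ := exists_inv f hf
  have fim := mono fi hfi
  have hficomm : ∀ w, fi (g w) = g (fi w) := by
    intro w
    have h1 : f (g (fi w)) = g w := by rw [hcomm, hfir]
    calc fi (g w) = fi (f (g (fi w))) := by rw [h1]
      _ = g (fi w) := hfil _
  have hfr : frontier s ⊆ {y : ℝ | f y = y} := frontier_subset f g hf hg hcomm hfixf
  have hfr' : frontier s ⊆ {y : ℝ | fi y = y} := by
    intro u hu
    have h1 : f u = u := hfr hu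
    show fi u = u
    calc fi u = fi (f u) := by rw [h1]
      _ = u := hfil u
  have hseg := segment_fix f g hg fm hcomm hfr
  have hseg' := segment_fix fi g hg fim hficomm hfr'
  -- a generic step: if z ∈ C and the segment from z to h z is in s, then h z ∈ C
  have step : ∀ (z w : ℝ), z ∈ C → (∀ t, min z w ≤ t → t ≤ max z w → g t = t) → w ∈ C := by
    intro z w hzC hJ
    have hJs : Icc (min z w) (max z w) ⊆ s := fun t ht => hJ t ht.1 ht.2
    have hzJ : z ∈ Icc (min z w) (max z w) := ⟨min_le_left _ _, le_max_left _ _⟩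
    have hwJ : w ∈ Icc (min z w) (max z w) := ⟨min_le_right _ _, le_max_right _ _⟩
    have hunion : IsPreconnected (C ∪ Icc (min z w) (max z w)) :=
      hCpre.union z hzC hzJ isPreconnected_Icc
    have hsubC : C ∪ Icc (min z w) (max z w) ⊆ connectedComponentIn s x :=
      hunion.subset_connectedComponentIn (Or.inl hxC) (union_subset hCs hJs)
    exact hsubC (Or.inr hwJ)
  apply Subset.antisymm
  · rintro _ ⟨z, hzC, rfl⟩
    exact step z (f z) hzC (hseg z (hCs hzC))
  · intro z hzC
    refine ⟨fi z, ?_, hfir z⟩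
    have hgz : g (fi z) = fi z := by
      have h1 : g z = z := hCs hzC
      calc g (fi z) = fi (g z) := (hficomm z).symm
        _ = fi z := by rw [h1]
    exact step z (fi z) hzC (hseg' z (hCs hzC))

end KP

/-- If `f` and `g` are commuting orientation-preserving `C²` diffeomorphisms of
`ℝ`, each having a fixed point, then `f` maps each connected component of
`Fix(g)` onto itself and the frontier of `Fix(g)` is contained in `Fix(f)`;
and symmetrically with the roles of `f` and `g` reversed. -/
theorem fix_components_preserved_of_commuting_C2_diffeos
    (f g : ℝ → ℝ) (hf : IsDiffeoR 2 f) (hg : IsDiffeoR 2 g)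
    (hcomm : ∀ x : ℝ, f (g x) = g (f x))
    (hfixf : ∃ x : ℝ, f x = x) (hfixg : ∃ x : ℝ, g x = x) :
    (∀ x ∈ {y : ℝ | g y = y},
      f '' connectedComponentIn {y : ℝ | g y = y} x
        = connectedComponentIn {y : ℝ | g y = y} x) ∧
    frontier {y : ℝ | g y = y} ⊆ {y : ℝ | f y = y} ∧
    (∀ x ∈ {y : ℝ | f y = y},
      g '' connectedComponentIn {y : ℝ | f y = y} x
        = connectedComponentIn {y : ℝ | f y = y} x) ∧
    frontier {y : ℝ | f y = y} ⊆ {y : ℝ | g y = y} := by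
  have hcomm' : ∀ x : ℝ, g (f x) = f (g x) := fun x => (hcomm x).symm
  exact ⟨KP.comp_preserved f g hf hg hcomm hfixf,
    KP.frontier_subset f g hf hg hcomm hfixf,
    KP.comp_preserved g f hg hf hcomm' hfixg,
    KP.frontier_subset g f hg hf hcomm' hfixg⟩
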